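/- Let α ∈ ℤ be odd and consider S_α = {2^ℓ − α²(8k+3) : ℓ, k ≥ 0 integers} ∩ ℕ. Then S_α contains an infinite arithmetic progression {n₀ + 8α²k : k ≥ 0} with 0 ≤ n₀ < 8α², and gcd(n₀, 8α²) = 1; consequently, by Dirichlet's theorem, S_α contains infinitely many primes, all congruent to 5 mod 8. -/

import Mathlib

def Sαset (α : ℤ) : Set ℕ :=
  {n | 0 < n ∧ ∃ ℓ k : ℕ, (n : ℤ) = 2 ^ ℓ - α ^ 2 * (8 * k + 3)}

theorem stmt_17 (α : ℤ) (hα : Odd α) :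
    (∃ n₀ : ℕ, n₀ < 8 * (α ^ 2).natAbs ∧ Nat.Coprime n₀ (8 * (α ^ 2).natAbs) ∧
      ∀ k : ℕ, n₀ + 8 * (α ^ 2).natAbs * k ∈ Sαset α) ∧
    {p | p ∈ Sαset α ∧ p.Prime}.Infinite ∧
    (∀ p ∈ Sαset α, Nat.Prime p → p % 8 = 5) := by
  have hαne : α ≠ 0 := by rintro rfl; exact (Int.not_odd_iff_even.mpr Even.zero) hα
  set a : ℕ := (α ^ 2).natAbs with ha_def
  have hα2pos : (0:ℤ) < α ^ 2 := by positivity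
  have hacast : (a : ℤ) = α ^ 2 := Int.natAbs_of_nonneg hα2pos.le
  have ha1 : 1 ≤ a := by
    by_contra h
    push_neg at h
    interval_cases a
    · simp at hacast; omega
  -- α² ≡ 1 mod 8
  have hsq : ∃ c : ℤ, α ^ 2 = 8 * c + 1 := by
    obtain ⟨b, hb⟩ := hα
    obtain ⟨e, he⟩ := Int.even_mul_succ_self b
    exact ⟨e, by rw [hb]; ring_nf; nlinarith [he]⟩
  obtain ⟨c, hc⟩ := hsq
  have hc0 : 0 ≤ c := by
    have : (0:ℤ) < 8 * c + 1 := hc ▸ hα2pos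
    omega
  have ha8 : a % 8 = 1 := by
    have : (a : ℤ) = 8 * c + 1 := by rw [hacast, hc]
    omega
  have haodd : Odd a := by
    rcases Nat.even_or_odd a with h | h
    · exfalso; obtain ⟨t, ht⟩ := h; omega
    · exact h
  -- coprimality of a with 8
  have hca8 : Nat.Coprime a 8 := by
    have h2 : Nat.Coprime a 2 := Nat.coprime_two_right.mpr haodd
    have := h2.pow_right 3
    norm_num at this
    exact this
  have hc2a : Nat.Coprime 2 a := Nat.coprime_two_left.mpr haodd
  -- order
  set d : ℕ := a.totient with hd_def
  have hd1 : 1 ≤ d := Nat.totient_pos.mpr ha1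
  have hper : 2 ^ d ≡ 1 [MOD a] := Nat.ModEq.pow_totient hc2a
  have hperiodic : ∀ t : ℕ, 2 ^ (3 + d * t) ≡ 2 ^ 3 [MOD 8 * a] := by
    intro t
    have h1 : 2 ^ (d * t) ≡ 1 [MOD a] := by
      have := hper.pow t
      rwa [← pow_mul, one_pow] at this
    have h2 : 8 * 2 ^ (d * t) ≡ 8 * 1 [MOD 8 * a] := h1.mul_left' (c := 8)
    calc 2 ^ (3 + d * t) = 8 * 2 ^ (d * t) := by rw [pow_add]; norm_num
      _ ≡ 8 * 1 [MOD 8 * a] := h2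
      _ = 2 ^ 3 := by norm_num
  set n₀ : ℕ := (8 + 5 * a) % (8 * a) with hn0_def
  have hm0 : 0 < 8 * a := by omega
  have hn0lt : n₀ < 8 * a := Nat.mod_lt _ hm0
  have hn08 : n₀ % 8 = 5 := by
    have h1 : n₀ % 8 = (8 + 5 * a) % 8 := by
      rw [hn0_def, Nat.mod_mod_of_dvd _ ⟨a, rfl⟩]
    omega
  have hn0a : n₀ % a = 8 % a := by
    have h1 : n₀ % a = (8 + 5 * a) % a := by
      rw [hn0_def, Nat.mod_mod_of_dvd _ (dvd_mul_left a 8)]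
    rw [h1, Nat.mul_comm 5 a, Nat.add_mul_mod_self_left]
  have hcop : Nat.Coprime n₀ (8 * a) := by
    have h8 : Nat.Coprime n₀ 8 := by
      have : Nat.gcd 8 n₀ = Nat.gcd (n₀ % 8) 8 := Nat.gcd_rec 8 n₀
      rw [hn08] at this
      have : Nat.gcd 8 n₀ = 1 := by rw [this]; decide
      exact Nat.coprime_comm.mp this
    have hA : Nat.Coprime n₀ a := by
      have h1 : Nat.gcd a n₀ = Nat.gcd (n₀ % a) a := Nat.gcd_rec a n₀
      have h2 : Nat.gcd a 8 = Nat.gcd (8 % a) a := Nat.gcd_rec a 8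
      rw [hn0a, ← h2] at h1
      exact Nat.coprime_comm.mp (by rw [Nat.Coprime] at hca8 ⊢; rw [h1, hca8])
    exact Nat.Coprime.mul_right h8 hA
  -- the AP membership
  have hAP : ∀ k : ℕ, n₀ + 8 * a * k ∈ Sαset α := by
    intro k
    have hn0pos : 0 < n₀ := by omega
    constructor
    · omega
    · -- choose t large
      set T : ℕ := n₀ + 8 * a * k + 3 * a with hT
      set L : ℕ := 3 + d * T with hL
      have hTL : T < 2 ^ L := by
        have h1 : T ≤ d * T := Nat.le_mul_of_pos_left T hd1
        calc T < 2 ^ T := Nat.lt_two_pow_self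
          _ ≤ 2 ^ L := Nat.pow_le_pow_right (by norm_num) (by omega)
      have hcong : (8 * (a:ℤ)) ∣ (2 ^ L : ℤ) - 8 := by
        have h := Nat.modEq_iff_dvd.mp (hperiodic T).symm
        push_cast at h
        convert h using 1 <;> push_cast <;> ring
      have hcong2 : (8 * (a:ℤ)) ∣ (8 + 5 * (a:ℤ)) - (n₀ : ℤ) := by
        have h := Nat.modEq_iff_dvd.mp (Nat.mod_modEq (8 + 5 * a) (8 * a))
        rw [← hn0_def] at h
        push_cast at h
        convert h using 1 <;> push_cast <;> ring
      have hdvd : (8 * (a:ℤ)) ∣ (2 ^ L : ℤ) - 3 * a - (n₀ + 8 * a * k) := by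
        obtain ⟨u, hu⟩ := hcong
        obtain ⟨v, hv⟩ := hcong2
        refine ⟨u + v - 1 - k, ?_⟩
        push_cast
        linarith [hu, hv]
      obtain ⟨z, hz⟩ := hdvd
      have hzpos : 0 ≤ z := by
        have hlhs : (0:ℤ) < (2 ^ L : ℤ) - 3 * a - (n₀ + 8 * a * k) := by
          have : (T : ℤ) < (2 ^ L : ℤ) := by exact_mod_cast hTL
          push_cast [hT] at this
          linarith
        nlinarith [hα2pos]
      refine ⟨L, z.toNat, ?_⟩
      have hz' : ((8:ℤ) * a) * z = (2 ^ L : ℤ) - 3 * a - (n₀ + 8 * a * k) := hz.symm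
      push_cast [Int.toNat_of_nonneg hzpos, ← hacast]
      linarith
  refine ⟨⟨n₀, hn0lt, hcop, hAP⟩, ?_, ?_⟩
  · -- infinitely many primes
    haveI : NeZero (8 * a) := ⟨by omega⟩
    have hUnit : IsUnit ((n₀ : ZMod (8 * a))) := (ZMod.isUnit_iff_coprime n₀ (8 * a)).mpr hcop
    have hInf := Nat.infinite_setOfPred_prime_and_eq_mod hUnit
    apply ((hInf.diff (Set.finite_lt_nat n₀)).mono ?_)
    rintro p ⟨⟨hp, hmod⟩, hge⟩
    simp only [Set.mem_setOf_eq, not_lt] at hge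
    rw [ZMod.natCast_eq_natCast_iff] at hmod
    obtain ⟨k, hk⟩ := (Nat.modEq_iff_dvd' hge).mp hmod.symm
    have : p = n₀ + 8 * a * k := by omega
    exact ⟨this ▸ hAP k, hp⟩
  · -- all primes ≡ 5 mod 8
    rintro p ⟨hppos, ℓ, k, hp⟩ hprime
    rw [← hacast] at hp
    rcases Nat.lt_or_ge ℓ 3 with hl | hl
    · exfalso
      have hp2 : (2:ℤ) ≤ (p:ℤ) := by exact_mod_cast hprime.two_le
      have hacast' : (a:ℤ) = 8 * c + 1 := by rw [hacast, hc]
      have hk0 : (0:ℤ) ≤ (k:ℤ) := Int.natCast_nonneg k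
      have h2l : (2:ℤ) ^ ℓ ≤ 4 := by interval_cases ℓ <;> norm_num
      have hprod : (3:ℤ) ≤ (8 * c + 1) * (8 * k + 3) := by nlinarith [hc0, hk0]
      rw [hacast'] at hp
      linarith
    · obtain ⟨m, rfl⟩ := Nat.exists_eq_add_of_le hl
      have h2l : (2:ℤ) ^ (3 + m) = 8 * 2 ^ m := by rw [pow_add]; norm_num
      have hacast' : (a:ℤ) = 8 * c + 1 := by rw [hacast, hc]
      have hy : (p:ℤ) = 8 * (2 ^ m - 8 * c * k - 3 * c - k) - 3 := by
        rw [hp, h2l, hacast']; ring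
      omega
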